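/- Let n ≥ 1 be an integer, set ν = n + 1/2, and let H_n(z) = ∑_{k=0}^n Γ(2n − k + 1) · z^k / (Γ(n − k + 1) · Γ(k + 1) · 2^{n−k}) be the monic complex polynomial of degree n. Let z_1, …, z_n be the roots of H_n, assumed pairwise distinct and all nonzero, and assume in addition that z_k + z_j ≠ 0 and z_k² + z_j² ≠ 0 for all j, k. Then for every j ∈ {1, …, n}: ∑_{k=1, k≠j}^n 1/(z_k⁴ − z_j⁴) = (2 − ν − z_j)/(4 z_j⁴) − (1/(4 z_j³)) · ∑_{k=1}^n ( 1/(z_j + z_k) + 2 z_j/(z_j² + z_k²) ). -/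

import Mathlib

open Finset

/-- The monic polynomial `H_n` associated with the modified Bessel function of the
second kind `K_{n+1/2}`. -/
noncomputable def macdonaldPoly (n : ℕ) (w : ℂ) : ℂ :=
  ∑ k ∈ Finset.range (n + 1),
    Complex.Gamma (2 * (n : ℂ) - (k : ℂ) + 1) * w ^ k /
      (Complex.Gamma ((n : ℂ) - (k : ℂ) + 1) * Complex.Gamma ((k : ℂ) + 1) *
        (2 : ℂ) ^ (n - k))

/-- The coefficients of `macdonaldPoly`. -/
noncomputable def mcc (n k : ℕ) : ℂ :=
  Complex.Gamma (2 * (n : ℂ) - (k : ℂ) + 1) /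
    (Complex.Gamma ((n : ℂ) - (k : ℂ) + 1) * Complex.Gamma ((k : ℂ) + 1) * (2 : ℂ) ^ (n - k))

lemma gamma_nat_ne_zero {m : ℕ} (hm : 0 < m) : Complex.Gamma (m : ℂ) ≠ 0 := by
  apply Complex.Gamma_ne_zero_of_re_pos
  simpa using hm

lemma mcc_rec (n k : ℕ) (hk : k < n) :
    mcc n (k + 1) * ((k : ℂ) + 1) * ((k : ℂ) - 2 * n) + 2 * ((n : ℂ) - k) * mcc n k = 0 := by
  have hk2n : k ≤ 2 * n := by omega
  have e1 : (2 * (n : ℂ) - ((k + 1 : ℕ) : ℂ) + 1) = 2 * (n : ℂ) - k := by push_cast; ring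
  have e2 : ((n : ℂ) - ((k + 1 : ℕ) : ℂ) + 1) = (n : ℂ) - k := by push_cast; ring
  have e3 : (((k + 1 : ℕ) : ℂ) + 1) = ((k : ℂ) + 1) + 1 := by push_cast; ring
  have c1 : (2 * (n : ℂ) - k) = ((2 * n - k : ℕ) : ℂ) := by
    rw [Nat.cast_sub hk2n]; push_cast; ring
  have c2 : ((n : ℂ) - k) = ((n - k : ℕ) : ℂ) := by
    rw [Nat.cast_sub hk.le]
  have h1 : (2 * (n : ℂ) - k) ≠ 0 := by
    rw [c1]; exact Nat.cast_ne_zero.mpr (by omega)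
  have h2 : ((n : ℂ) - k) ≠ 0 := by
    rw [c2]; exact Nat.cast_ne_zero.mpr (by omega)
  have h3 : ((k : ℂ) + 1) ≠ 0 := by
    have : ((k : ℂ) + 1) = ((k + 1 : ℕ) : ℂ) := by push_cast; ring
    rw [this]; exact Nat.cast_ne_zero.mpr (by omega)
  have g1 : Complex.Gamma (2 * (n : ℂ) - k + 1)
      = (2 * (n : ℂ) - k) * Complex.Gamma (2 * (n : ℂ) - k) :=
    Complex.Gamma_add_one _ h1
  have g2 : Complex.Gamma ((n : ℂ) - k + 1) = ((n : ℂ) - k) * Complex.Gamma ((n : ℂ) - k) :=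
    Complex.Gamma_add_one _ h2
  have g3 : Complex.Gamma (((k : ℂ) + 1) + 1) = ((k : ℂ) + 1) * Complex.Gamma ((k : ℂ) + 1) :=
    Complex.Gamma_add_one _ h3
  have gnk : Complex.Gamma ((n : ℂ) - k) ≠ 0 := by
    rw [c2]; exact gamma_nat_ne_zero (by omega)
  have gk : Complex.Gamma ((k : ℂ) + 1) ≠ 0 := by
    have : ((k : ℂ) + 1) = ((k + 1 : ℕ) : ℂ) := by push_cast; ring
    rw [this]; exact gamma_nat_ne_zero (by omega)
  have hp : (2 : ℂ) ^ (n - k) = 2 ^ (n - (k + 1)) * 2 := by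
    rw [← pow_succ]; congr 1; omega
  have hpne : (2 : ℂ) ^ (n - (k + 1)) ≠ 0 := pow_ne_zero _ two_ne_zero
  unfold mcc
  rw [e1, e2, e3, g1, g2, g3, hp]
  field_simp
  ring

lemma macP_eq (n : ℕ) (w : ℂ) :
    macdonaldPoly n w = ∑ k ∈ Finset.range (n + 1), mcc n k * w ^ k := by
  unfold macdonaldPoly mcc
  exact Finset.sum_congr rfl fun k _ => by rw [mul_div_right_comm]

/-- The first derivative of `macdonaldPoly`. -/
noncomputable def mac1 (n : ℕ) (w : ℂ) : ℂ :=
  ∑ k ∈ Finset.range (n + 1), mcc n k * ((k : ℂ) * w ^ (k - 1))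

/-- The second derivative of `macdonaldPoly`. -/
noncomputable def mac2 (n : ℕ) (w : ℂ) : ℂ :=
  ∑ k ∈ Finset.range (n + 1), mcc n k * ((k : ℂ) * (((k - 1 : ℕ)) * w ^ (k - 2)))

lemma hasDerivAt_macP (n : ℕ) (w : ℂ) : HasDerivAt (macdonaldPoly n) (mac1 n w) w := by
  have : macdonaldPoly n = fun w => ∑ k ∈ Finset.range (n + 1), mcc n k * w ^ k := by
    funext w; exact macP_eq n w
  rw [this]
  exact HasDerivAt.fun_sum fun k _ => (hasDerivAt_pow k w).const_mul (mcc n k)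

lemma hasDerivAt_mac1 (n : ℕ) (w : ℂ) : HasDerivAt (mac1 n) (mac2 n w) w := by
  unfold mac1 mac2
  apply HasDerivAt.fun_sum
  intro k _
  have h := ((hasDerivAt_pow (k - 1) w).const_mul ((k : ℂ))).const_mul (mcc n k)
  have e : (k - 1 - 1) = (k - 2) := by omega
  rw [e] at h
  exact h

lemma mac_ode (n : ℕ) (w : ℂ) :
    w * mac2 n w = 2 * (w + n) * mac1 n w - 2 * n * macdonaldPoly n w := by
  rw [macP_eq]
  unfold mac1 mac2
  rw [← sub_eq_zero, Finset.mul_sum, Finset.mul_sum, Finset.mul_sum, ← Finset.sum_sub_distrib,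
    ← Finset.sum_sub_distrib]
  have step1 : ∀ k ∈ Finset.range (n + 1),
      w * (mcc n k * ((k : ℂ) * (((k - 1 : ℕ)) * w ^ (k - 2))))
        - (2 * (w + (n : ℂ)) * (mcc n k * ((k : ℂ) * w ^ (k - 1)))
            - 2 * n * (mcc n k * w ^ k))
      = mcc n k * ((k : ℂ) * (((k : ℂ) - 1 - 2 * n) * w ^ (k - 1)))
          + 2 * ((n : ℂ) - k) * mcc n k * w ^ k := by
    intro k _
    match k with
    | 0 => simp
    | 1 => norm_num; ring
    | (m + 2) =>
      have e1 : m + 2 - 1 = m + 1 := rfl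
      have e2 : m + 2 - 2 = m := rfl
      rw [e1, e2]
      push_cast
      ring
  rw [Finset.sum_congr rfl step1, Finset.sum_add_distrib, Finset.sum_range_succ',
    Finset.sum_range_succ]
  simp only [Nat.cast_zero, zero_mul, mul_zero, add_zero, sub_self, zero_mul, mul_zero]
  rw [← Finset.sum_add_distrib]
  refine Finset.sum_eq_zero fun k hk => ?_
  have hkn : k < n := Finset.mem_range.mp hk
  have e : k + 1 - 1 = k := rfl
  rw [e]
  have h := mcc_rec n k hkn
  push_cast
  linear_combination w ^ k * h

lemma hasDerivAt_prodz {n : ℕ} (z : Fin n → ℂ) (w : ℂ) :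
    HasDerivAt (fun w => ∏ j, (w - z j))
      (∑ k, ∏ l ∈ Finset.univ.erase k, (w - z l)) w := by
  have h := HasDerivAt.fun_finsetProd (u := Finset.univ) (f := fun i w => w - z i)
    (f' := fun _ => 1) (x := w) (fun i _ => (hasDerivAt_id w).sub_const (z i))
  simpa using h

lemma hasDerivAt_prodz1 {n : ℕ} (z : Fin n → ℂ) (w : ℂ) :
    HasDerivAt (fun w => ∑ k, ∏ l ∈ Finset.univ.erase k, (w - z l))
      (∑ k : Fin n, ∑ m ∈ Finset.univ.erase k,
        ∏ l ∈ (Finset.univ.erase k).erase m, (w - z l)) w := by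
  apply HasDerivAt.fun_sum
  intro k _
  have h := HasDerivAt.fun_finsetProd (u := Finset.univ.erase k) (f := fun i w => w - z i)
    (f' := fun _ => 1) (x := w) (fun i _ => (hasDerivAt_id w).sub_const (z i))
  simpa using h

theorem macdonald_zeros_quartic_sum_identity (n : ℕ) (hn : 1 ≤ n) (ν : ℂ)
    (hν : ν = (n : ℂ) + 1 / 2) (z : Fin n → ℂ) (hinj : Function.Injective z)
    (hz0 : ∀ k, z k ≠ 0) (hsum : ∀ j k, z k + z j ≠ 0)
    (hsumsq : ∀ j k, (z k) ^ 2 + (z j) ^ 2 ≠ 0)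
    (hroots : ∀ w : ℂ, macdonaldPoly n w = ∏ j, (w - z j)) (j : Fin n) :
    ∑ k ∈ Finset.univ.erase j, 1 / ((z k) ^ 4 - (z j) ^ 4)
      = (2 - ν - z j) / (4 * (z j) ^ 4)
        - (1 / (4 * (z j) ^ 3)) *
            ∑ k, (1 / (z j + z k) + 2 * z j / ((z j) ^ 2 + (z k) ^ 2)) := by
  classical
  set s := z j with hsdef
  have hs0 : s ≠ 0 := hz0 j
  have hfun : macdonaldPoly n = fun w => ∏ j, (w - z j) := funext hroots
  have hd1 : ∀ w, mac1 n w = ∑ k, ∏ l ∈ Finset.univ.erase k, (w - z l) := by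
    intro w
    have h := hasDerivAt_macP n w
    rw [hfun] at h
    exact h.unique (hasDerivAt_prodz z w)
  have hfun1 : mac1 n = fun w => ∑ k, ∏ l ∈ Finset.univ.erase k, (w - z l) := funext hd1
  have hd2 : mac2 n s = ∑ k : Fin n, ∑ m ∈ Finset.univ.erase k,
      ∏ l ∈ (Finset.univ.erase k).erase m, (s - z l) := by
    have h := hasDerivAt_mac1 n s
    rw [hfun1] at h
    exact h.unique (hasDerivAt_prodz1 z s)
  have hdiff : ∀ l ∈ Finset.univ.erase j, s - z l ≠ 0 := by
    intro l hl
    have hlj : l ≠ j := (Finset.mem_erase.mp hl).1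
    exact sub_ne_zero.mpr fun h => hlj (hinj h).symm
  set D := ∏ l ∈ Finset.univ.erase j, (s - z l) with hD
  have hD0 : D ≠ 0 := Finset.prod_ne_zero_iff.mpr hdiff
  have hP1 : (∑ k, ∏ l ∈ Finset.univ.erase k, (s - z l)) = D := by
    apply Finset.sum_eq_single_of_mem j (Finset.mem_univ j)
    intro k _ hkj
    exact Finset.prod_eq_zero
      (Finset.mem_erase.mpr ⟨Ne.symm hkj, Finset.mem_univ j⟩) (sub_eq_zero_of_eq hsdef)
  set T := ∑ k ∈ Finset.univ.erase j, ∏ l ∈ (Finset.univ.erase j).erase k, (s - z l) with hT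
  have hP2 : (∑ k : Fin n, ∑ m ∈ Finset.univ.erase k,
      ∏ l ∈ (Finset.univ.erase k).erase m, (s - z l)) = 2 * T := by
    rw [← Finset.add_sum_erase _ _ (Finset.mem_univ j)]
    have inner : ∀ k ∈ Finset.univ.erase j,
        (∑ m ∈ Finset.univ.erase k, ∏ l ∈ (Finset.univ.erase k).erase m, (s - z l))
          = ∏ l ∈ (Finset.univ.erase j).erase k, (s - z l) := by
      intro k hk
      have hkj : k ≠ j := (Finset.mem_erase.mp hk).1
      rw [Finset.sum_eq_single_of_mem j
        (Finset.mem_erase.mpr ⟨Ne.symm hkj, Finset.mem_univ j⟩) ?_]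
      · rw [Finset.erase_right_comm]
      · intro m hm hmj
        refine Finset.prod_eq_zero ?_ (sub_eq_zero_of_eq hsdef)
        exact Finset.mem_erase.mpr ⟨Ne.symm hmj,
          Finset.mem_erase.mpr ⟨Ne.symm hkj, Finset.mem_univ j⟩⟩
    rw [Finset.sum_congr rfl inner, ← hT]
    ring
  have hmac0 : macdonaldPoly n s = 0 := by
    rw [hroots]
    exact Finset.prod_eq_zero (Finset.mem_univ j) (sub_eq_zero_of_eq hsdef)
  have hkey : s * (2 * T) = 2 * (s + n) * D := by
    have h := mac_ode n s
    rw [hd2, hP2, hd1 s, hP1, hmac0] at h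
    linear_combination h
  have hTD : T = D * (∑ k ∈ Finset.univ.erase j, 1 / (s - z k)) := by
    rw [hT, Finset.mul_sum]
    refine Finset.sum_congr rfl fun k hk => ?_
    rw [mul_one_div, eq_div_iff (hdiff k hk)]
    exact Finset.prod_erase_mul _ _ hk
  have hS : s * (∑ k ∈ Finset.univ.erase j, 1 / (s - z k)) = s + n := by
    have h2 : (s * (∑ k ∈ Finset.univ.erase j, 1 / (s - z k)) - (s + n)) * (2 * D) = 0 := by
      linear_combination hkey - 2 * s * hTD
    rcases mul_eq_zero.mp h2 with h | h
    · exact sub_eq_zero.mp h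
    · exact absurd h (mul_ne_zero two_ne_zero hD0)
  have hSval : (∑ k ∈ Finset.univ.erase j, 1 / (s - z k)) = (s + n) / s := by
    rw [eq_div_iff hs0]
    linear_combination hS
  have key : ∀ k ∈ Finset.univ.erase j, 1 / (z k ^ 4 - s ^ 4)
      = (-(1 / (4 * s ^ 3))) * (1 / (s - z k)) - (1 / (4 * s ^ 3)) * (1 / (z k + s))
        - (1 / (2 * s ^ 2)) * (1 / (z k ^ 2 + s ^ 2)) := by
    intro k hk
    have h1 : s - z k ≠ 0 := hdiff k hk
    have h2 : z k + s ≠ 0 := by rw [hsdef]; exact hsum j k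
    have h3 : z k ^ 2 + s ^ 2 ≠ 0 := by rw [hsdef]; exact hsumsq j k
    have h4 : z k ^ 4 - s ^ 4 ≠ 0 := by
      intro h
      apply mul_ne_zero (mul_ne_zero (neg_ne_zero.mpr h1) h2) h3
      linear_combination h
    have hs3 : (4 : ℂ) * s ^ 3 ≠ 0 := mul_ne_zero (by norm_num) (pow_ne_zero _ hs0)
    have hs2 : (2 : ℂ) * s ^ 2 ≠ 0 := mul_ne_zero (by norm_num) (pow_ne_zero _ hs0)
    rw [show (-(1 / (4 * s ^ 3))) * (1 / (s - z k)) = -(1 * 1 / ((4 * s ^ 3) * (s - z k))) from by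
          rw [neg_mul, div_mul_div_comm],
        show (1 / (4 * s ^ 3)) * (1 / (z k + s)) = 1 * 1 / ((4 * s ^ 3) * (z k + s)) from by
          rw [div_mul_div_comm],
        show (1 / (2 * s ^ 2)) * (1 / (z k ^ 2 + s ^ 2))
            = 1 * 1 / ((2 * s ^ 2) * (z k ^ 2 + s ^ 2)) from by rw [div_mul_div_comm],
        one_mul, neg_div']
    have hd12 := mul_ne_zero (mul_ne_zero hs3 h1) (mul_ne_zero hs3 h2)
    have hd123 := mul_ne_zero hd12 (mul_ne_zero hs2 h3)
    rw [div_sub_div _ _ (mul_ne_zero hs3 h1) (mul_ne_zero hs3 h2)]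
    rw [div_sub_div _ _ hd12 (mul_ne_zero hs2 h3)]
    rw [div_eq_div_iff h4 hd123]
    ring
  rw [Finset.sum_congr rfl key]
  simp only [Finset.sum_sub_distrib, ← Finset.mul_sum]
  rw [hSval, ← Finset.add_sum_erase _ _ (Finset.mem_univ j)]
  have rterm : ∀ k ∈ Finset.univ.erase j,
      (1 / (s + z k) + 2 * s / (s ^ 2 + z k ^ 2))
        = 1 / (z k + s) + (2 * s) * (1 / (z k ^ 2 + s ^ 2)) := by
    intro k _
    rw [add_comm s (z k), add_comm (s ^ 2) (z k ^ 2), mul_one_div]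
  rw [Finset.sum_congr rfl rterm, Finset.sum_add_distrib, ← Finset.mul_sum]
  have h2s : s + s ≠ 0 := by rw [hsdef]; exact hsum j j
  have h2sq : s ^ 2 + s ^ 2 ≠ 0 := by rw [hsdef]; exact hsumsq j j
  rw [hν, ← hsdef]
  have e1 : s + s = 2 * s := by ring
  have e2 : s ^ 2 + s ^ 2 = 2 * s ^ 2 := by ring
  rw [e1, e2]
  linear_combination (s⁻¹ ^ 4 / 4
      + (∑ i ∈ Finset.univ.erase j, 1 / (z i ^ 2 + s ^ 2)) * s⁻¹ ^ 2 / 2)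
    * (mul_inv_cancel₀ hs0)
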